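/- Let A and B be bounded self-adjoint operators (matrices) on ℂ^N and τ > 0. Then ‖e^{-i(A+B)τ} − e^{-iAτ} e^{-iBτ}‖ ≤ (τ²/2)·‖[A,B]‖ in operator norm. -/

import Mathlib

open NormedSpace Complex

set_option maxHeartbeats 4000000
set_option synthInstance.maxHeartbeats 400000

private lemma key_alg2 {R : Type*} [Ring R] (Er E MA MB : R) (hc : MA * E = E * MA) :
    Er * MA * (MB * E) + Er * (MB * -(E * MA)) = Er * ((MA * MB - MB * MA) * E) := by
  rw [← hc]; noncomm_ring

private lemma key_alg {R : Type*} [Ring R] (U V W MA MB : R)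
    (h1 : MA * V = V * MA) (h2 : MB * W = W * MB) :
    -(U * (MA + MB)) * (V * W) + U * (V * MA * W + V * (W * MB))
      = U * ((V * MB - MB * V) * W) := by
  have expand : -(U * (MA + MB)) * (V * W)
      = -(U * (MA * (V * W))) - U * (MB * (V * W)) := by noncomm_ring
  have hMA : MA * (V * W) = V * (MA * W) := by rw [← mul_assoc, h1, mul_assoc]
  rw [expand, mul_add U, hMA, ← h2]
  noncomm_ring

section TrotterAux

variable {N : ℕ}

local notation "𝔸" => EuclideanSpace ℂ (Fin N) →L[ℂ] EuclideanSpace ℂ (Fin N)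

private lemma norm_exp_le_one {A : 𝔸} (hA : IsSelfAdjoint A) (t : ℝ) :
    ‖NormedSpace.exp (t • ((-Complex.I) • A))‖ ≤ 1 := by
  have hskew : t • ((-Complex.I) • A) ∈ skewAdjoint 𝔸 := by
    rw [← algebraMap_smul ℂ t ((-Complex.I) • A), smul_smul, skewAdjoint.mem_iff, star_smul,
      hA.star_eq]
    have h0 : star ((algebraMap ℝ ℂ t) * -Complex.I) = -((algebraMap ℝ ℂ t) * -Complex.I) := by
      simp [Complex.ext_iff]
    rw [h0]
    exact neg_smul ((algebraMap ℝ ℂ t) * -Complex.I) A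
  have hu : NormedSpace.exp (t • ((-Complex.I) • A)) ∈ unitary 𝔸 :=
    letI : NormedAlgebra ℚ 𝔸 := NormedAlgebra.restrictScalars ℚ ℂ 𝔸
    exp_mem_unitary_of_mem_skewAdjoint hskew
  set u : 𝔸 := NormedSpace.exp (t • ((-Complex.I) • A))
  have h1 : star u * u = 1 := hu.1
  have h2 : ‖u‖ * ‖u‖ ≤ 1 := by
    rw [← CStarRing.norm_star_mul_self, h1]
    exact ContinuousLinearMap.norm_id_le
  nlinarith [norm_nonneg u]

private lemma hasDerivAt_expR (M : 𝔸) (s : ℝ) :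
    HasDerivAt (fun u : ℝ => NormedSpace.exp (u • M)) (NormedSpace.exp (s • M) * M) s :=
  hasDerivAt_exp_smul_const M s

private lemma commute_exp (M : 𝔸) (s : ℝ) : M * NormedSpace.exp (s • M) = NormedSpace.exp (s • M) * M := by
  rw [← algebraMap_smul ℂ s M]
  exact (((Commute.refl M).smul_right ((algebraMap ℝ ℂ s))).exp_right).eq

private lemma continuous_expR (M : 𝔸) : Continuous fun s : ℝ => NormedSpace.exp (s • M) :=
  letI : NormedAlgebra ℚ 𝔸 := NormedAlgebra.restrictScalars ℚ ℂ 𝔸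
  exp_continuous.comp (continuous_id.smul continuous_const)

/-- commutator growth bound : `‖[exp(s•MA), MB]‖ ≤ |s| * ‖[MA,MB]‖` -/
private lemma comm_bound (MA MB : 𝔸) (hMA : ∀ t : ℝ, ‖NormedSpace.exp (t • MA)‖ ≤ 1) (s : ℝ) :
    ‖NormedSpace.exp (s • MA) * MB - MB * NormedSpace.exp (s • MA)‖ ≤ |s| * ‖MA * MB - MB * MA‖ := by
  set K := ‖MA * MB - MB * MA‖ with hK
  set g : ℝ → 𝔸 := fun r => NormedSpace.exp (r • MA) * (MB * NormedSpace.exp ((s - r) • MA)) with hg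
  have hderiv : ∀ r : ℝ, HasDerivAt g
      (NormedSpace.exp (r • MA) * ((MA * MB - MB * MA) * NormedSpace.exp ((s - r) • MA))) r := by
    intro r
    have h1 : HasDerivAt (fun u : ℝ => NormedSpace.exp (u • MA)) (NormedSpace.exp (r • MA) * MA) r :=
      hasDerivAt_expR MA r
    have h2 : HasDerivAt (fun u : ℝ => NormedSpace.exp ((s - u) • MA))
        (-(NormedSpace.exp ((s - r) • MA) * MA)) r := by
      have hinner : HasDerivAt (fun u : ℝ => s - u) (-1 : ℝ) r :=
        (hasDerivAt_id r).const_sub s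
      have := (hasDerivAt_expR MA (s - r)).scomp r hinner
      simp at this
      exact this
    have h3 : HasDerivAt (fun u : ℝ => MB * NormedSpace.exp ((s - u) • MA))
        (MB * -(NormedSpace.exp ((s - r) • MA) * MA)) r := h2.const_mul MB
    have h4 := h1.mul h3
    exact h4.congr_deriv (key_alg2 (NormedSpace.exp (r • MA)) (NormedSpace.exp ((s - r) • MA)) MA MB
      (commute_exp MA (s - r)))
  have hbound : ∀ r : ℝ, ‖NormedSpace.exp (r • MA) * ((MA * MB - MB * MA) * NormedSpace.exp ((s - r) • MA))‖ ≤ K := by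
    intro r
    calc ‖NormedSpace.exp (r • MA) * ((MA * MB - MB * MA) * NormedSpace.exp ((s - r) • MA))‖
        ≤ ‖NormedSpace.exp (r • MA)‖ * (‖MA * MB - MB * MA‖ * ‖NormedSpace.exp ((s - r) • MA)‖) :=
          (norm_mul_le _ _).trans (by gcongr; exact norm_mul_le _ _)
      _ ≤ 1 * (K * 1) := by
          gcongr <;> first | exact hMA _ | exact le_rfl | positivity
      _ = K := by ring
  have key : ‖g s - g 0‖ ≤ K * ‖s - (0 : ℝ)‖ :=
    (convex_univ (𝕜 := ℝ)).norm_image_sub_le_of_norm_hasDerivWithin_le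
      (fun r _ => (hderiv r).hasDerivWithinAt) (fun r _ => hbound r) (Set.mem_univ 0)
      (Set.mem_univ s)
  have hz : (0 : ℝ) • MA = 0 := zero_smul ℝ MA
  have hg0 : g 0 = MB * NormedSpace.exp (s • MA) := by
    show NormedSpace.exp ((0:ℝ) • MA) * (MB * NormedSpace.exp ((s - 0) • MA)) = MB * NormedSpace.exp (s • MA)
    rw [hz, NormedSpace.exp_zero, one_mul, sub_zero]
  have hgs : g s = NormedSpace.exp (s • MA) * MB := by
    show NormedSpace.exp (s • MA) * (MB * NormedSpace.exp ((s - s) • MA)) = NormedSpace.exp (s • MA) * MB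
    rw [sub_self, hz, NormedSpace.exp_zero, mul_one]
  calc ‖NormedSpace.exp (s • MA) * MB - MB * NormedSpace.exp (s • MA)‖ = ‖g s - g 0‖ := by rw [hg0, hgs]
    _ ≤ K * ‖s - (0 : ℝ)‖ := key
    _ = |s| * K := by rw [sub_zero, Real.norm_eq_abs]; ring

end TrotterAux

/-- Trotter-type error bound
`‖e^{-i(A+B)τ} − e^{-iAτ} e^{-iBτ}‖ ≤ (τ²/2)·‖[A,B]‖` for self-adjoint operators. -/
theorem stmt_3 {N : ℕ} (A B : EuclideanSpace ℂ (Fin N) →L[ℂ] EuclideanSpace ℂ (Fin N))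
    (hA : IsSelfAdjoint A) (hB : IsSelfAdjoint B) (τ : ℝ) (hτ : 0 < τ) :
    ‖NormedSpace.exp ((-Complex.I * (τ : ℂ)) • (A + B))
        - NormedSpace.exp ((-Complex.I * (τ : ℂ)) • A) * NormedSpace.exp ((-Complex.I * (τ : ℂ)) • B)‖
      ≤ τ ^ 2 / 2 * ‖A * B - B * A‖ := by
  have hAB : IsSelfAdjoint (A + B) :=
    @IsSelfAdjoint.add (EuclideanSpace ℂ (Fin N) →L[ℂ] EuclideanSpace ℂ (Fin N)) _ _ A B hA hB
  set MA := (-Complex.I) • A with hMA_def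
  set MB := (-Complex.I) • B with hMB_def
  set K := ‖A * B - B * A‖ with hK_def
  -- conversion of the complex exponentials to real-parameter exponentials
  have hconv : ∀ X : EuclideanSpace ℂ (Fin N) →L[ℂ] EuclideanSpace ℂ (Fin N),
      NormedSpace.exp ((-Complex.I * (τ : ℂ)) • X) = NormedSpace.exp (τ • ((-Complex.I) • X)) := by
    intro X
    congr 1
    rw [mul_comm, mul_smul]
    exact algebraMap_smul ℂ τ ((-Complex.I) • X)
  -- norm bounds
  have hVle : ∀ t : ℝ, ‖NormedSpace.exp (t • MA)‖ ≤ 1 := fun t => norm_exp_le_one hA t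
  have hWle : ∀ t : ℝ, ‖NormedSpace.exp (t • MB)‖ ≤ 1 := fun t => norm_exp_le_one hB t
  have hsmul_add : (-Complex.I) • (A + B) = MA + MB := smul_add _ _ _
  have hUle : ∀ t : ℝ, ‖NormedSpace.exp (t • (MA + MB))‖ ≤ 1 := by
    intro t
    have h := norm_exp_le_one hAB t
    rwa [hsmul_add] at h
  -- the commutator norm
  have hKcomm : ‖MA * MB - MB * MA‖ = K := by
    have e1 : MA * MB = -(A * B) := by
      rw [hMA_def, hMB_def, smul_mul_assoc, mul_smul_comm, smul_smul]
      have h : ((-Complex.I) * (-Complex.I)) = (-1 : ℂ) := by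
        simp [Complex.I_mul_I]
      rw [h]
      exact neg_one_smul ℂ (A * B)
    have e2 : MB * MA = -(B * A) := by
      rw [hMA_def, hMB_def, smul_mul_assoc, mul_smul_comm, smul_smul]
      have h : ((-Complex.I) * (-Complex.I)) = (-1 : ℂ) := by
        simp [Complex.I_mul_I]
      rw [h]
      exact neg_one_smul ℂ (B * A)
    rw [e1, e2, show -(A * B) - -(B * A) = -(A * B - B * A) by abel, norm_neg, hK_def]
  -- the interpolating path and its derivative
  set V : ℝ → EuclideanSpace ℂ (Fin N) →L[ℂ] EuclideanSpace ℂ (Fin N) :=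
    fun s => NormedSpace.exp (s • MA) with hV_def
  set W : ℝ → EuclideanSpace ℂ (Fin N) →L[ℂ] EuclideanSpace ℂ (Fin N) :=
    fun s => NormedSpace.exp (s • MB) with hW_def
  set U : ℝ → EuclideanSpace ℂ (Fin N) →L[ℂ] EuclideanSpace ℂ (Fin N) :=
    fun s => NormedSpace.exp (s • (MA + MB)) with hU_def
  set D : ℝ → EuclideanSpace ℂ (Fin N) →L[ℂ] EuclideanSpace ℂ (Fin N) :=
    fun s => U (τ - s) * (V s * W s) with hD_def
  set D' : ℝ → EuclideanSpace ℂ (Fin N) →L[ℂ] EuclideanSpace ℂ (Fin N) :=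
    fun s => U (τ - s) * ((V s * MB - MB * V s) * W s) with hD'_def
  have hDderiv : ∀ s : ℝ, HasDerivAt D (D' s) s := by
    intro s
    have hU' : HasDerivAt (fun u : ℝ => U (τ - u)) (-(U (τ - s) * (MA + MB))) s := by
      have hinner : HasDerivAt (fun u : ℝ => τ - u) (-1 : ℝ) s := (hasDerivAt_id s).const_sub τ
      have h := (hasDerivAt_expR (MA + MB) (τ - s)).scomp s hinner
      simp only [neg_smul, one_smul] at h
      exact h
    have hV' : HasDerivAt V (V s * MA) s := hasDerivAt_expR MA s
    have hW' : HasDerivAt W (W s * MB) s := hasDerivAt_expR MB s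
    have hVW := hV'.mul hW'
    have h4 := hU'.mul hVW
    exact h4.congr_deriv (key_alg (U (τ - s)) (V s) (W s) MA MB (commute_exp MA s) (commute_exp MB s))
  -- pointwise norm bound on the derivative
  have hD'bound : ∀ s : ℝ, ‖D' s‖ ≤ |s| * K := by
    intro s
    have hK0 : (0 : ℝ) ≤ |s| * K := by
      rw [hK_def]
      positivity
    have hX : ‖V s * MB - MB * V s‖ ≤ |s| * K := by
      rw [← hKcomm]
      exact comm_bound MA MB hVle s
    calc ‖D' s‖ ≤ ‖U (τ - s)‖ * ‖(V s * MB - MB * V s) * W s‖ := norm_mul_le _ _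
      _ ≤ 1 * ((|s| * K) * 1) :=
          mul_le_mul (hUle _) ((norm_mul_le _ _).trans
            (mul_le_mul hX (hWle s) (norm_nonneg _) hK0)) (norm_nonneg _) zero_le_one
      _ = |s| * K := by ring
  -- continuity / integrability
  have hcontD' : Continuous D' := by
    rw [hD'_def]
    exact ((continuous_expR (MA + MB)).comp (continuous_const.sub continuous_id)).mul
      ((((continuous_expR MA).mul continuous_const).sub
        (continuous_const.mul (continuous_expR MA))).mul (continuous_expR MB))
  have hintD' : IntervalIntegrable D' MeasureTheory.volume 0 τ :=
    hcontD'.intervalIntegrable 0 τ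
  -- FTC
  have hFTC : ∫ s in (0)..τ, D' s = D τ - D 0 :=
    intervalIntegral.integral_eq_sub_of_hasDerivAt (fun s _ => hDderiv s) hintD'
  have hzA : (0 : ℝ) • MA = 0 := zero_smul ℝ MA
  have hzB : (0 : ℝ) • MB = 0 := zero_smul ℝ MB
  have hzAB : (0 : ℝ) • (MA + MB) = 0 := zero_smul ℝ (MA + MB)
  have hD0 : D 0 = U τ := by
    show NormedSpace.exp ((τ - 0) • (MA + MB)) * (NormedSpace.exp ((0 : ℝ) • MA) * NormedSpace.exp ((0 : ℝ) • MB)) = U τ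
    rw [hzA, hzB, NormedSpace.exp_zero, one_mul, mul_one, sub_zero]
  have hDτ : D τ = V τ * W τ := by
    show NormedSpace.exp ((τ - τ) • (MA + MB)) * (V τ * W τ) = V τ * W τ
    rw [sub_self, hzAB, NormedSpace.exp_zero, one_mul]
  have key : ‖D τ - D 0‖ ≤ τ ^ 2 / 2 * K := by
    rw [← hFTC]
    calc ‖∫ s in (0)..τ, D' s‖ ≤ ∫ s in (0)..τ, ‖D' s‖ :=
          intervalIntegral.norm_integral_le_integral_norm hτ.le
      _ ≤ ∫ s in (0)..τ, s * K := by
          apply intervalIntegral.integral_mono_on hτ.le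
            (hcontD'.norm.intervalIntegrable 0 τ)
            ((continuous_id'.mul continuous_const).intervalIntegrable 0 τ)
          intro s hs
          have := hD'bound s
          rwa [_root_.abs_of_nonneg hs.1] at this
      _ = τ ^ 2 / 2 * K := by
          rw [intervalIntegral.integral_mul_const, integral_id]
          try ring
  rw [hconv (A + B), hconv A, hconv B, hsmul_add]
  calc ‖NormedSpace.exp (τ • (MA + MB)) - NormedSpace.exp (τ • MA) * NormedSpace.exp (τ • MB)‖
      = ‖D τ - D 0‖ := by
        rw [hD0, hDτ, norm_sub_rev]
        try rfl
    _ ≤ τ ^ 2 / 2 * K := key
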